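/- arXiv:2004.13999 — 3 statements merged into one kernel-verified Lean document; each statement's English description precedes it below -/
import Mathlib

section
/- Let E = EuclideanSpace ℝ (Fin (2*M)), let P : E ≃ₗᵢ[ℝ] E be a linear isometry equivalence with P ∘ P = id, let C : (EuclideanSpace ℝ (Fin N)) →ₗ[ℝ] E be a linear map, and let H = range C ⊔ range (P.toLinearMap ∘ₗ C) with orthogonal projection Π onto H. Let d ∈ H and c ∈ ℝ. Suppose sequences λ : ℕ → E and x : ℕ → EuclideanSpace ℝ (Fin N) satisfy λ(k+1) = P (λ k) + c • (C (x (k+1)) + P (C (x k)) − 2 • d) for all k. Then for all k, (λ k) − Π (λ k) = P^[k] ((λ 0) − Π (λ 0)); that is, the component of the dual variable in the non-convergent subspace Hᗮ is, at every iteration k, exactly the k-fold application of P to the non-convergent component of the initial dual variable. -/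
open Submodule

/-- Equation (12) of the paper: under the PDMM dual update
`λ^{k+1} = P λ^k + c (C x^{k+1} + P (C x^k) − 2d)` with `P` an orthogonal involution,
`H = range C ⊔ range (P C)` and `d ∈ H`, the component of the dual variable in the
non-convergent subspace `Hᗮ` at iteration `k` is exactly `P^[k]` applied to the non-convergent
component of the initial dual variable. -/
theorem pdmm_nonconvergent_component {M N : ℕ}
    (P : EuclideanSpace ℝ (Fin (2 * M)) ≃ₗᵢ[ℝ] EuclideanSpace ℝ (Fin (2 * M)))
    (hP : (⇑P) ∘ (⇑P) = id)
    (C : EuclideanSpace ℝ (Fin N) →ₗ[ℝ] EuclideanSpace ℝ (Fin (2 * M)))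
    (H : Submodule ℝ (EuclideanSpace ℝ (Fin (2 * M))))
    (hH : H = LinearMap.range C ⊔ LinearMap.range (P.toLinearEquiv.toLinearMap ∘ₗ C))
    (d : EuclideanSpace ℝ (Fin (2 * M))) (hd : d ∈ H) (c : ℝ)
    (lam : ℕ → EuclideanSpace ℝ (Fin (2 * M))) (x : ℕ → EuclideanSpace ℝ (Fin N))
    (hup : ∀ k, lam (k + 1) = P (lam k)
      + c • (C (x (k + 1)) + P (C (x k)) - (2 : ℝ) • d)) :
    ∀ k, lam k - (orthogonalProjection H (lam k) : EuclideanSpace ℝ (Fin (2 * M)))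
      = (⇑P)^[k] (lam 0 - (orthogonalProjection H (lam 0) :
          EuclideanSpace ℝ (Fin (2 * M)))) := by
  have hPP : ∀ v, P (P v) = v := fun v => congrFun hP v
  -- range C ⊆ H, range (P ∘ C) ⊆ H
  have hC : ∀ y, C y ∈ H := by
    intro y; rw [hH]; exact mem_sup_left ⟨y, rfl⟩
  have hPC : ∀ y, P (C y) ∈ H := by
    intro y; rw [hH]; exact mem_sup_right ⟨y, rfl⟩
  -- P maps H into H
  have hPH : ∀ v ∈ H, P v ∈ H := by
    intro v hv
    rw [hH] at hv
    rcases mem_sup.mp hv with ⟨a, ⟨y, hy⟩, b, ⟨z, hz⟩, rfl⟩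
    have : P (a + b) = P a + P b := by simp [map_add]
    rw [this]
    refine add_mem (by rw [← hy]; exact hPC y) ?_
    simp only [LinearMap.coe_comp, Function.comp_apply,
      LinearEquiv.coe_coe, LinearIsometryEquiv.coe_toLinearEquiv] at hz
    rw [← hz, hPP]
    exact hC z
  -- P maps Hᗮ into Hᗮ
  have hPHc : ∀ w ∈ Hᗮ, P w ∈ Hᗮ := by
    intro w hw
    intro u hu
    have : (inner ℝ u (P w) : ℝ) = inner ℝ (P (P u)) (P w) := by rw [hPP]
    rw [this, P.inner_map_map]
    exact hw (P u) (hPH u hu)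
  -- projection commutes with P
  have hproj : ∀ v, (orthogonalProjection H (P v) : EuclideanSpace ℝ (Fin (2 * M)))
      = P (orthogonalProjection H v : EuclideanSpace ℝ (Fin (2 * M))) := by
    intro v
    have hdecomp : P v = P (orthogonalProjection H v : EuclideanSpace ℝ (Fin (2 * M)))
        + P (v - (orthogonalProjection H v : EuclideanSpace ℝ (Fin (2 * M)))) := by
      rw [← map_add]; congr 1; abel
    have h1 : P (orthogonalProjection H v : EuclideanSpace ℝ (Fin (2 * M))) ∈ H :=
      hPH _ (SetLike.coe_mem _)
    have h2 : P (v - (orthogonalProjection H v : EuclideanSpace ℝ (Fin (2 * M)))) ∈ Hᗮ :=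
      hPHc _ (sub_starProjection_mem_orthogonal (K := H) v)
    rw [hdecomp, map_add, Submodule.coe_add, (show ((orthogonalProjection H _ : H) : EuclideanSpace ℝ (Fin (2 * M))) = _ from starProjection_eq_self_iff.mpr h1),
      Submodule.orthogonalProjectionOnto_apply_of_mem_orthogonal h2]
    simp
  intro k
  induction k with
  | zero => simp
  | succ k ih =>
    have hu : c • (C (x (k + 1)) + P (C (x k)) - (2 : ℝ) • d) ∈ H :=
      smul_mem _ _ (sub_mem (add_mem (hC _) (hPC _)) (smul_mem _ _ hd))
    have key : lam (k + 1) - (orthogonalProjection H (lam (k + 1)) :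
        EuclideanSpace ℝ (Fin (2 * M)))
        = P (lam k - (orthogonalProjection H (lam k) : EuclideanSpace ℝ (Fin (2 * M)))) := by
      rw [hup k, map_add, Submodule.coe_add, (show ((orthogonalProjection H _ : H) : EuclideanSpace ℝ (Fin (2 * M))) = _ from starProjection_eq_self_iff.mpr hu),
        hproj, map_sub]
      push_cast
      abel
    rw [key, ih, Function.iterate_succ', Function.comp_apply]
end

section
/- Let E = EuclideanSpace ℝ (Fin d), let P : E ≃ₗᵢ[ℝ] E be a linear isometry equivalence with P ∘ P = id, let C : F →ₗ[ℝ] E be a linear map from a finite-dimensional real inner product space F, and let H = range C ⊔ range (P.toLinearMap ∘ₗ C) with orthogonal projection Π onto H. Then for every λ ∈ E and every x ∈ F, ⟪P (λ − Π λ), C x⟫ = 0; equivalently, ⟪P λ, C x⟫ = ⟪P (Π λ), C x⟫. -/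
open Submodule

open scoped RealInnerProductSpace

/-- Remark 3 of the paper: with `H = range C ⊔ range (P C)` for an orthogonal involution `P`,
the non-convergent component of the dual variable is orthogonal (after applying `P`) to every
vector `C x`: `⟪P (λ − Π λ), C x⟫ = 0`, equivalently `⟪P λ, C x⟫ = ⟪P (Π λ), C x⟫`. Hence the
primal update is independent of the non-convergent component. -/
theorem nonconvergent_component_orthogonal {d : ℕ} {F : Type*}
    [NormedAddCommGroup F] [InnerProductSpace ℝ F] [FiniteDimensional ℝ F]
    (P : EuclideanSpace ℝ (Fin d) ≃ₗᵢ[ℝ] EuclideanSpace ℝ (Fin d))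
    (hP : (⇑P) ∘ (⇑P) = id)
    (C : F →ₗ[ℝ] EuclideanSpace ℝ (Fin d))
    (H : Submodule ℝ (EuclideanSpace ℝ (Fin d)))
    (hH : H = LinearMap.range C ⊔ LinearMap.range (P.toLinearEquiv.toLinearMap ∘ₗ C)) :
    ∀ (lam : EuclideanSpace ℝ (Fin d)) (x : F),
      ⟪P (lam - (orthogonalProjection H lam : EuclideanSpace ℝ (Fin d))), C x⟫ = 0 ∧
      ⟪P lam, C x⟫
        = ⟪P ((orthogonalProjection H lam : EuclideanSpace ℝ (Fin d))), C x⟫ := by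
  intro lam x
  have hPP : ∀ v, P (P v) = v := fun v => congrFun hP v
  have hkey : ∀ v : EuclideanSpace ℝ (Fin d), ⟪P v, C x⟫ = ⟪v, P (C x)⟫ := by
    intro v
    conv_lhs => rw [← hPP (C x)]
    exact P.inner_map_map v (P (C x))
  have hPCx : P (C x) ∈ H := by
    rw [hH]
    exact Submodule.mem_sup_right ⟨x, rfl⟩
  have hmem : lam - (orthogonalProjection H lam : EuclideanSpace ℝ (Fin d)) ∈ Hᗮ :=
    H.sub_starProjection_mem_orthogonal lam
  have h0 : ⟪P (lam - (orthogonalProjection H lam : EuclideanSpace ℝ (Fin d))), C x⟫ = 0 := by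
    rw [hkey]
    rw [real_inner_comm]; exact hmem (P (C x)) hPCx
  refine ⟨h0, ?_⟩
  have := h0
  rw [map_sub, inner_sub_left, sub_eq_zero] at this
  exact this
end

section
/- Let Q be a real p×u matrix, y ∈ ℝ^p, let J be a finite index set with |J| = d ≥ 1, and for each j ∈ J let xⱼ ∈ ℝ^u, λⱼ ∈ ℝ^u, and εⱼ ∈ ({1, −1} : Set ℝ). Let c > 0. Then the matrix Qᵀ*Q + (c·d) • (1 : Matrix (Fin u) (Fin u) ℝ) is invertible, and the function g(x) = (1/2)‖y − Q.mulVec x‖² + Σⱼ εⱼ • ⟪λⱼ, x⟫ + (c/2) Σⱼ ‖x − xⱼ‖² has the unique minimizer x⁺ = (Qᵀ*Q + (c·d) • 1)⁻¹.mulVec (Qᵀ.mulVec y + Σⱼ (c • xⱼ − εⱼ • λⱼ)): for all x ∈ ℝ^u, g(x) ≥ g(x⁺) with equality if and only if x = x⁺. -/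
open Matrix Finset

open scoped RealInnerProductSpace

lemma my_dot_self_nonneg {n : Type*} [Fintype n] (v : n → ℝ) : 0 ≤ v ⬝ᵥ v :=
  Finset.sum_nonneg fun i _ => mul_self_nonneg (v i)

lemma my_norm_sq {n : ℕ} (w : Fin n → ℝ) :
    ‖(WithLp.equiv 2 (Fin n → ℝ)).symm w‖ ^ 2 = w ⬝ᵥ w := by
  rw [← real_inner_self_eq_norm_sq]
  simp [PiLp.inner_apply, dotProduct, RCLike.inner_apply]
  rw [EuclideanSpace.norm_sq_eq]
  simp [sq]

lemma my_sum_dot {J n : Type*} [Fintype J] [Fintype n] (f : J → n → ℝ) (v : n → ℝ) :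
    (∑ j, f j) ⬝ᵥ v = ∑ j, f j ⬝ᵥ v := by
  simp only [dotProduct, Finset.sum_apply, Finset.sum_mul]
  exact Finset.sum_comm

lemma my_inner {n : ℕ} (a b : Fin n → ℝ) :
    ⟪(WithLp.equiv 2 (Fin n → ℝ)).symm a, (WithLp.equiv 2 (Fin n → ℝ)).symm b⟫ = a ⬝ᵥ b := by
  simp [PiLp.inner_apply, dotProduct, RCLike.inner_apply]
  exact Finset.sum_congr rfl fun i _ => mul_comm _ _

/-- Equation (22) of the paper: the PDMM local primal update for distributed least squares.
With `εⱼ = ±1`, `c > 0` and `|J| = d ≥ 1`, the matrix `QᵀQ + (c·d) I` is invertible and the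
local augmented Lagrangian
`g(x) = (1/2)‖y − Q x‖² + ∑ⱼ εⱼ ⟪λⱼ, x⟫ + (c/2) ∑ⱼ ‖x − xⱼ‖²` (Euclidean norms and inner
products) has the unique minimizer `x⁺ = (QᵀQ + c·d·I)⁻¹ (Qᵀ y + ∑ⱼ (c xⱼ − εⱼ λⱼ))`. -/
theorem pdmm_least_squares_local_update {p u d : ℕ} (hd : 1 ≤ d)
    {J : Type*} [Fintype J] (hJ : Fintype.card J = d)
    (Q : Matrix (Fin p) (Fin u) ℝ) (y : Fin p → ℝ)
    (xnb lam : J → (Fin u → ℝ))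
    (ε : J → ℝ) (hε : ∀ j, ε j ∈ ({1, -1} : Set ℝ)) (c : ℝ) (hc : 0 < c)
    (g : (Fin u → ℝ) → ℝ)
    (hg : g = fun x => 1 / 2 * ‖(WithLp.equiv 2 (Fin p → ℝ)).symm (y - Q.mulVec x)‖ ^ 2
      + ∑ j, ε j • ⟪(WithLp.equiv 2 (Fin u → ℝ)).symm (lam j),
          (WithLp.equiv 2 (Fin u → ℝ)).symm x⟫
      + c / 2 * ∑ j, ‖(WithLp.equiv 2 (Fin u → ℝ)).symm (x - xnb j)‖ ^ 2)
    (A : Matrix (Fin u) (Fin u) ℝ)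
    (hA : A = Qᵀ * Q + (c * d) • (1 : Matrix (Fin u) (Fin u) ℝ))
    (xplus : Fin u → ℝ)
    (hxplus : xplus = A⁻¹.mulVec (Qᵀ.mulVec y + ∑ j, (c • xnb j - ε j • lam j))) :
    IsUnit A ∧ ∀ x, g x ≥ g xplus ∧ (g x = g xplus ↔ x = xplus) := by
  set b : Fin u → ℝ := Qᵀ.mulVec y + ∑ j, (c • xnb j - ε j • lam j) with hb
  -- quadratic form of A
  have hsym : ∀ v w : Fin u → ℝ,
      v ⬝ᵥ (A *ᵥ w) = (Q *ᵥ v) ⬝ᵥ (Q *ᵥ w) + (c * d) * (v ⬝ᵥ w) := by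
    intro v w
    rw [hA, add_mulVec, dotProduct_add, smul_mulVec, one_mulVec, dotProduct_smul,
      ← mulVec_mulVec, dotProduct_mulVec v Qᵀ, vecMul_transpose, smul_eq_mul]
  -- positive definiteness
  have hposdef : A.PosDef := by
    rw [posDef_iff_dotProduct_mulVec]
    constructor
    · rw [hA]
      have h1 : (Qᵀ * Q).IsHermitian := by
        simpa [conjTranspose_eq_transpose_of_trivial] using isHermitian_conjTranspose_mul_self Q
      have h2 : ((c * d) • (1 : Matrix (Fin u) (Fin u) ℝ)).IsHermitian := by
        show _ᴴ = _
        rw [conjTranspose_smul, conjTranspose_one, star_trivial]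
      exact h1.add h2
    · intro x hx
      rw [star_trivial, hsym]
      have h1 : 0 ≤ (Q *ᵥ x) ⬝ᵥ (Q *ᵥ x) := my_dot_self_nonneg _
      have h2 : 0 < x ⬝ᵥ x := by
        rcases lt_or_eq_of_le (my_dot_self_nonneg x) with h | h
        · exact h
        · exact absurd (dotProduct_self_eq_zero.mp h.symm) hx
      have hcd : 0 < c * d := by
        have : (1 : ℝ) ≤ (d : ℝ) := by exact_mod_cast hd
        positivity
      nlinarith
  have hU : IsUnit A := hposdef.isUnit
  refine ⟨hU, ?_⟩
  -- A xplus = b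
  have hAx : A *ᵥ xplus = b := by
    rw [hxplus, mulVec_mulVec, Matrix.mul_nonsing_inv A ((Matrix.isUnit_iff_isUnit_det A).mp hU),
      one_mulVec]
  -- expansion of g
  have expand : ∀ x : Fin u → ℝ, g x =
      1 / 2 * ((Q *ᵥ x) ⬝ᵥ (Q *ᵥ x)) + (c * d) / 2 * (x ⬝ᵥ x) - b ⬝ᵥ x
        + (1 / 2 * (y ⬝ᵥ y) + c / 2 * ∑ j, xnb j ⬝ᵥ xnb j) := by
    intro x
    rw [hg]
    simp only [my_norm_sq, my_inner, smul_eq_mul]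
    have e1 : (y - Q *ᵥ x) ⬝ᵥ (y - Q *ᵥ x)
        = y ⬝ᵥ y - 2 * ((Qᵀ *ᵥ y) ⬝ᵥ x) + (Q *ᵥ x) ⬝ᵥ (Q *ᵥ x) := by
      rw [dotProduct_sub, sub_dotProduct, sub_dotProduct,
        dotProduct_mulVec y Q, ← mulVec_transpose, dotProduct_comm (Q *ᵥ x) y,
        dotProduct_mulVec y Q, ← mulVec_transpose]
      ring
    have e2 : ∑ j, ε j * (lam j ⬝ᵥ x) = (∑ j, ε j • lam j) ⬝ᵥ x := by
      rw [my_sum_dot]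
      exact Finset.sum_congr rfl fun j _ => by rw [smul_dotProduct, smul_eq_mul]
    have e3 : ∑ j, (x - xnb j) ⬝ᵥ (x - xnb j)
        = (d : ℝ) * (x ⬝ᵥ x) - 2 * ((∑ j, xnb j) ⬝ᵥ x) + ∑ j, xnb j ⬝ᵥ xnb j := by
      have : ∀ j : J, (x - xnb j) ⬝ᵥ (x - xnb j)
          = x ⬝ᵥ x - 2 * (xnb j ⬝ᵥ x) + xnb j ⬝ᵥ xnb j := by
        intro j
        rw [dotProduct_sub, sub_dotProduct, sub_dotProduct, dotProduct_comm x (xnb j)]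
        ring
      rw [Finset.sum_congr rfl fun j _ => this j]
      rw [Finset.sum_add_distrib, Finset.sum_sub_distrib, Finset.sum_const, Finset.card_univ, hJ,
        nsmul_eq_mul, ← Finset.mul_sum, my_sum_dot]
    have e4 : b ⬝ᵥ x = (Qᵀ *ᵥ y) ⬝ᵥ x + c * ((∑ j, xnb j) ⬝ᵥ x) - (∑ j, ε j • lam j) ⬝ᵥ x := by
      rw [hb, add_dotProduct, my_sum_dot, my_sum_dot, my_sum_dot, Finset.mul_sum,
        add_sub_assoc, ← Finset.sum_sub_distrib]
      congr 1
      exact Finset.sum_congr rfl fun j _ => by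
        rw [sub_dotProduct, smul_dotProduct, smul_eq_mul]
    rw [e1, e2, e3, e4]
    ring
  -- the key difference identity
  have key : ∀ x : Fin u → ℝ, g x - g xplus
      = 1 / 2 * ((Q *ᵥ (x - xplus)) ⬝ᵥ (Q *ᵥ (x - xplus)))
        + (c * d) / 2 * ((x - xplus) ⬝ᵥ (x - xplus)) := by
    intro x
    have hbx : b ⬝ᵥ x = (Q *ᵥ x) ⬝ᵥ (Q *ᵥ xplus) + (c * d) * (x ⬝ᵥ xplus) := by
      rw [← hAx, dotProduct_comm, hsym, dotProduct_comm x xplus, dotProduct_comm (Q *ᵥ x)]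
    have hbxp : b ⬝ᵥ xplus = (Q *ᵥ xplus) ⬝ᵥ (Q *ᵥ xplus) + (c * d) * (xplus ⬝ᵥ xplus) := by
      rw [← hAx, dotProduct_comm, hsym]
    rw [expand x, expand xplus, hbx, hbxp]
    rw [mulVec_sub, dotProduct_sub, sub_dotProduct, sub_dotProduct,
      dotProduct_sub, sub_dotProduct, sub_dotProduct,
      dotProduct_comm (Q *ᵥ xplus) (Q *ᵥ x), dotProduct_comm xplus x]
    ring
  intro x
  have hq : 0 ≤ (Q *ᵥ (x - xplus)) ⬝ᵥ (Q *ᵥ (x - xplus)) := my_dot_self_nonneg _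
  have hr : 0 ≤ (x - xplus) ⬝ᵥ (x - xplus) := my_dot_self_nonneg _
  have hcd : 0 < c * d := by
    have : (1 : ℝ) ≤ (d : ℝ) := by exact_mod_cast hd
    positivity
  constructor
  · nlinarith [key x]
  · constructor
    · intro h
      have h0 : (x - xplus) ⬝ᵥ (x - xplus) = 0 := by nlinarith [key x]
      have := dotProduct_self_eq_zero.mp h0
      rwa [sub_eq_zero] at this
    · intro h; rw [h]
end
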